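/- Let G : (0,∞) → [0,∞) be convex, nonincreasing, nonnegative, with G(0+) < ∞ and finite right derivative G'_+(0) at 0, and let γ > 0, T > 0, n ∈ ℕ. Define G_n(0) = γ 2^{-(n+1)} T + 2^{-2n+1} T² ∫₀¹ G(2^{-n}Ts)(1-s) ds, G_n(t) = 2^{-2n} T² ∫_{-1}^1 G(t + 2^{-n}Ts)(1-|s|) ds for t ≥ 2^{-n}T, and G_n linear on (0, 2^{-n}T). Then G_n is convex, nonincreasing, and nonnegative on [2^{-n}T, ∞), and there exists n₀ such that G_n is convex on [0,∞) for all n ≥ n₀. -/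

import Mathlib

open MeasureTheory intervalIntegral

section Aux

open Set Filter

lemma glue_convex {f : ℝ → ℝ} {h l : ℝ} (hh : 0 < h)
    (hlin : ∀ t ∈ Set.Icc (0:ℝ) h, f t = f h + l * (t - h))
    (hconv : ConvexOn ℝ (Set.Ici h) f)
    (hslope : ∀ t, h < t → l * (t - h) ≤ f t - f h) :
    ConvexOn ℝ (Set.Ici (0:ℝ)) f := by
  rw [convexOn_iff_slope_mono_adjacent]
  refine ⟨convex_Ici 0, fun x y z hx hz hxy hyz => ?_⟩
  simp only [Set.mem_Ici] at hx hz
  have hy0 : 0 ≤ y := le_of_lt (lt_of_le_of_lt hx hxy)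
  rcases le_or_gt z h with hzh | hzh
  · have e1 : f y - f x = l * (y - x) := by
      rw [hlin x ⟨hx, by linarith⟩, hlin y ⟨hy0, by linarith⟩]; ring
    have e2 : f z - f y = l * (z - y) := by
      rw [hlin y ⟨hy0, by linarith⟩, hlin z ⟨by linarith, hzh⟩]; ring
    rw [e1, e2, mul_div_assoc, mul_div_assoc, div_self (by linarith), div_self (by linarith)]
  · rcases le_or_gt h x with hhx | hhx
    · exact hconv.slope_mono_adjacent (Set.mem_Ici.mpr hhx)
        (Set.mem_Ici.mpr (by linarith)) hxy hyz
    · have hfx : f x = f h + l * (x - h) := hlin x ⟨hx, hhx.le⟩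
      rcases le_or_gt y h with hyh | hyh
      · have hfy : f y = f h + l * (y - h) := hlin y ⟨hy0, hyh⟩
        have e1 : f y - f x = l * (y - x) := by rw [hfx, hfy]; ring
        rw [e1, mul_div_assoc, div_self (by linarith : y - x ≠ 0), mul_one]
        rw [le_div_iff₀ (by linarith)]
        have hz1 : l * (z - h) ≤ f z - f h := hslope z hzh
        nlinarith
      · have key : l ≤ (f y - f h) / (y - h) := by
          rw [le_div_iff₀ (by linarith)]
          exact hslope y hyh
        have h2 : (f y - f h) / (y - h) ≤ (f z - f y) / (z - y) :=
          hconv.slope_mono_adjacent (Set.mem_Ici.mpr (le_refl h))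
            (Set.mem_Ici.mpr (by linarith)) hyh hyz
        refine le_trans ?_ h2
        rw [div_le_div_iff₀ (by linarith) (by linarith), hfx]
        rw [le_div_iff₀ (by linarith)] at key
        have prod : 0 ≤ (h - x) * ((f y - f h) - l * (y - h)) :=
          mul_nonneg (by linarith) (by linarith)
        nlinarith [prod]

lemma convexOn_congr' {s : Set ℝ} {f g : ℝ → ℝ} (hfg : ∀ x ∈ s, f x = g x)
    (hf : ConvexOn ℝ s f) : ConvexOn ℝ s g := by
  refine ⟨hf.1, fun x hx y hy a b ha hb hab => ?_⟩
  rw [← hfg x hx, ← hfg y hy, ← hfg _ (hf.1 hx hy ha hb hab)]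
  exact hf.2 hx hy ha hb hab

section Gfacts
variable {G : ℝ → ℝ} {G0 d : ℝ}

lemma G_le_G0 (hGanti : AntitoneOn G (Set.Ioi 0))
    (hG0 : Tendsto G (nhdsWithin 0 (Set.Ioi 0)) (nhds G0)) :
    ∀ x, 0 < x → G x ≤ G0 := by
  intro x hx
  refine ge_of_tendsto hG0 ?_
  filter_upwards [Ioo_mem_nhdsGT_of_mem (show (0:ℝ) ∈ Set.Ico 0 x from ⟨le_refl 0, hx⟩)]
    with u hu
  exact hGanti hu.1 hx hu.2.le

lemma G_secant (hGconv : ConvexOn ℝ (Set.Ioi 0) G)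
    (hG0 : Tendsto G (nhdsWithin 0 (Set.Ioi 0)) (nhds G0)) :
    ∀ u x, 0 < u → u < x → G u ≤ (u / x) * G x + (1 - u / x) * G0 := by
  intro u x hu hux
  have hx : 0 < x := hu.trans hux
  have hev : ∀ᶠ ε in nhdsWithin 0 (Set.Ioi 0),
      G u ≤ ((u - ε) / (x - ε)) * G x + (1 - (u - ε) / (x - ε)) * G ε := by
    filter_upwards [Ioo_mem_nhdsGT_of_mem (show (0:ℝ) ∈ Set.Ico 0 u from ⟨le_refl 0, hu⟩)]
      with ε hε
    have hε0 : 0 < ε := hε.1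
    have hεu : ε < u := hε.2
    have hxε : 0 < x - ε := by linarith
    set a : ℝ := (u - ε) / (x - ε) with ha
    have ha0 : 0 ≤ a := div_nonneg (by linarith) (by linarith)
    have ha1 : a ≤ 1 := by rw [div_le_one hxε]; linarith
    have hcomb : a * x + (1 - a) * ε = u := by
      have h1 : a * (x - ε) = u - ε := by rw [ha]; exact div_mul_cancel₀ _ hxε.ne'
      linear_combination h1
    have := hGconv.2 (Set.mem_Ioi.mpr hx) (Set.mem_Ioi.mpr hε0) ha0 (by linarith)
      (by ring : a + (1 - a) = 1)
    rw [smul_eq_mul, smul_eq_mul, smul_eq_mul, smul_eq_mul] at this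
    rw [hcomb] at this
    exact this
  have hlim : Tendsto (fun ε : ℝ => ((u - ε) / (x - ε)) * G x + (1 - (u - ε) / (x - ε)) * G ε)
      (nhdsWithin 0 (Set.Ioi 0)) (nhds ((u / x) * G x + (1 - u / x) * G0)) := by
    have hc : Tendsto (fun ε : ℝ => (u - ε) / (x - ε)) (nhdsWithin 0 (Set.Ioi 0))
        (nhds (u / x)) := by
      have : ContinuousAt (fun ε : ℝ => (u - ε) / (x - ε)) 0 := by
        apply ContinuousAt.div
        · fun_prop
        · fun_prop
        · simpa using hx.ne'
      simpa using this.tendsto.mono_left nhdsWithin_le_nhds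
    exact ((hc.mul tendsto_const_nhds).add
      (((tendsto_const_nhds.sub hc)).mul hG0))
  exact ge_of_tendsto hlim hev

lemma G_ge_lin (hGconv : ConvexOn ℝ (Set.Ioi 0) G)
    (hG0 : Tendsto G (nhdsWithin 0 (Set.Ioi 0)) (nhds G0))
    (hd : Tendsto (fun t => (G t - G0) / t) (nhdsWithin 0 (Set.Ioi 0)) (nhds d)) :
    ∀ x, 0 < x → G0 + d * x ≤ G x := by
  intro x hx
  have key : d ≤ (G x - G0) / x := by
    refine le_of_tendsto hd ?_
    filter_upwards [Ioo_mem_nhdsGT_of_mem (show (0:ℝ) ∈ Set.Ico 0 x from ⟨le_refl 0, hx⟩)]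
      with u hu
    have hu0 : 0 < u := hu.1
    have hux : u < x := hu.2
    have := G_secant hGconv hG0 u x hu0 hux
    rw [div_le_div_iff₀ hu0 hx]
    have hxne : (x:ℝ) ≠ 0 := hx.ne'
    have h3 := mul_le_mul_of_nonneg_right this hx.le
    have e1 : u / x * G x * x = u * G x := by field_simp
    have e2 : (1 - u / x) * G0 * x = (x - u) * G0 := by field_simp
    rw [add_mul, e1, e2] at h3
    nlinarith
  rw [le_div_iff₀ hx] at key
  linarith

lemma G_slope (hsec : ∀ u x, 0 < u → u < x → G u ≤ (u / x) * G x + (1 - u / x) * G0)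
    (hlin : ∀ x, 0 < x → G0 + d * x ≤ G x) :
    ∀ x y, 0 < x → x ≤ y → d * (y - x) ≤ G y - G x := by
  intro x y hx hxy
  rcases eq_or_lt_of_le hxy with rfl | hlt
  · simp
  · have hy : 0 < y := hx.trans hlt
    have h1 := hsec x y hx hlt
    have h2 := hlin y hy
    have hxy' : x / y ≤ 1 := by rw [div_le_one hy]; linarith
    have hxy0 : 0 ≤ x / y := div_nonneg hx.le hy.le
    have e3 : (1 - x / y) * (d * y) = d * (y - x) := by field_simp
    nlinarith [mul_le_mul_of_nonneg_left (show d * y ≤ G y - G0 by linarith)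
      (show (0:ℝ) ≤ 1 - x / y by linarith)]

end Gfacts

lemma tri_integral : (∫ s in (-1:ℝ)..1, (1 - |s|)) = 1 := by
  have h1 : (∫ s in (-1:ℝ)..(0:ℝ), (1 - |s|)) = 1/2 := by
    have : ∀ s ∈ Set.uIcc (-1:ℝ) 0, (1 - |s|) = 1 + s := by
      intro s hs
      rw [Set.uIcc_of_le (by norm_num)] at hs
      rw [abs_of_nonpos hs.2]; ring
    rw [intervalIntegral.integral_congr this]
    rw [intervalIntegral.integral_add intervalIntegrable_const intervalIntegrable_id]
    simp [integral_id]
    norm_num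
  have h2 : (∫ s in (0:ℝ)..(1:ℝ), (1 - |s|)) = 1/2 := by
    have : ∀ s ∈ Set.uIcc (0:ℝ) 1, (1 - |s|) = 1 - s := by
      intro s hs
      rw [Set.uIcc_of_le (by norm_num)] at hs
      rw [abs_of_nonneg hs.1]
    rw [intervalIntegral.integral_congr this]
    rw [intervalIntegral.integral_sub intervalIntegrable_const intervalIntegrable_id]
    simp [integral_id]
    norm_num
  rw [← intervalIntegral.integral_add_adjacent_intervals (b := (0:ℝ))
    (by apply IntervalIntegrable.sub intervalIntegrable_const
        exact (continuous_abs).intervalIntegrable _ _)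
    (by apply IntervalIntegrable.sub intervalIntegrable_const
        exact (continuous_abs).intervalIntegrable _ _),
    h1, h2]
  norm_num

lemma integrable_kernel {G : ℝ → ℝ} {G0 : ℝ}
    (hGc : ContinuousOn G (Set.Ioi 0))
    (hb : ∀ x : ℝ, 0 < x → 0 ≤ G x ∧ G x ≤ G0)
    {h t : ℝ} (hh : 0 < h) (hht : h ≤ t) :
    IntervalIntegrable (fun s => G (t + h * s) * (1 - |s|)) volume (-1) 1 := by
  rw [intervalIntegrable_iff_integrableOn_Ioc_of_le (by norm_num)]
  have hpos : ∀ s ∈ Set.Ioc (-1:ℝ) 1, 0 < t + h * s := by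
    intro s hs
    nlinarith [hs.1]
  have hcont : ContinuousOn (fun s => G (t + h * s) * (1 - |s|)) (Set.Ioc (-1:ℝ) 1) := by
    apply ContinuousOn.mul
    · exact hGc.comp (by fun_prop) (fun s hs => Set.mem_Ioi.mpr (hpos s hs))
    · fun_prop
  refine Integrable.mono' (g := fun _ => G0)
    (integrableOn_const measure_Ioc_lt_top.ne)
    (hcont.aestronglyMeasurable measurableSet_Ioc) ?_
  rw [ae_restrict_iff' measurableSet_Ioc]
  refine ae_of_all _ fun s hs => ?_
  have h1 : 0 < t + h * s := hpos s hs
  have h2 : 0 ≤ G (t + h * s) := (hb _ h1).1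
  have h3 : G (t + h * s) ≤ G0 := (hb _ h1).2
  have h4 : 0 ≤ 1 - |s| := by
    have : |s| ≤ 1 := abs_le.mpr ⟨hs.1.le, hs.2⟩
    linarith
  have h5 : 1 - |s| ≤ 1 := by nlinarith [abs_nonneg s]
  rw [Real.norm_eq_abs, abs_of_nonneg (mul_nonneg h2 h4)]
  nlinarith

section K
variable {G : ℝ → ℝ} {G0 d h : ℝ}

variable (hGc : ContinuousOn G (Set.Ioi 0))
  (hb : ∀ x : ℝ, 0 < x → 0 ≤ G x ∧ G x ≤ G0)
  (hGconv : ConvexOn ℝ (Set.Ioi 0) G)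
  (hGanti : AntitoneOn G (Set.Ioi 0))
  (hh : 0 < h)
include hGc hb hh

include hGconv in
lemma K_convex :
    ConvexOn ℝ (Set.Ici h) (fun t => ∫ s in (-1:ℝ)..1, G (t + h * s) * (1 - |s|)) := by
  refine ⟨convex_Ici h, fun x hx y hy a b ha hb' hab => ?_⟩
  simp only [smul_eq_mul, Set.mem_Ici] at *
  have hw : h ≤ a * x + b * y := by
    calc h = a * h + b * h := by rw [← add_mul, hab, one_mul]
    _ ≤ a * x + b * y := by gcongr
  have hIx := integrable_kernel hGc hb hh hx
  have hIy := integrable_kernel hGc hb hh hy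
  have hIw := integrable_kernel hGc hb hh hw
  have step : (∫ s in (-1:ℝ)..1, G (a * x + b * y + h * s) * (1 - |s|)) ≤
      ∫ s in (-1:ℝ)..1, (a * (G (x + h * s) * (1 - |s|)) + b * (G (y + h * s) * (1 - |s|))) := by
    refine intervalIntegral.integral_mono_on (by norm_num) hIw
      ((hIx.const_mul a).add (hIy.const_mul b)) (fun s hs => ?_)
    rcases eq_or_lt_of_le hs.1 with rfl | hs1
    · simp
    · have hxp : 0 < x + h * s := by nlinarith
      have hyp : 0 < y + h * s := by nlinarith
      have hf : 0 ≤ 1 - |s| := by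
        have : |s| ≤ 1 := abs_le.mpr ⟨hs.1, hs.2⟩
        linarith
      have key := hGconv.2 (Set.mem_Ioi.mpr hxp) (Set.mem_Ioi.mpr hyp) ha hb' hab
      simp only [smul_eq_mul] at key
      have harg : a * (x + h * s) + b * (y + h * s) = a * x + b * y + h * s := by
        have : a + b = 1 := hab
        nlinarith [this]
      rw [harg] at key
      nlinarith [mul_le_mul_of_nonneg_right key hf]
  calc (∫ s in (-1:ℝ)..1, G (a * x + b * y + h * s) * (1 - |s|)) ≤ _ := step
    _ = a * (∫ s in (-1:ℝ)..1, G (x + h * s) * (1 - |s|)) +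
        b * (∫ s in (-1:ℝ)..1, G (y + h * s) * (1 - |s|)) := by
      rw [intervalIntegral.integral_add (hIx.const_mul a) (hIy.const_mul b),
        intervalIntegral.integral_const_mul, intervalIntegral.integral_const_mul]

include hGanti in
lemma K_anti :
    AntitoneOn (fun t => ∫ s in (-1:ℝ)..1, G (t + h * s) * (1 - |s|)) (Set.Ici h) := by
  intro x hx y hy hxy
  simp only [Set.mem_Ici] at hx hy
  refine intervalIntegral.integral_mono_on (by norm_num)
    (integrable_kernel hGc hb hh hy) (integrable_kernel hGc hb hh hx) (fun s hs => ?_)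
  rcases eq_or_lt_of_le hs.1 with rfl | hs1
  · simp
  · have hxp : 0 < x + h * s := by nlinarith
    have hyp : 0 < y + h * s := by nlinarith
    have hf : 0 ≤ 1 - |s| := by
      have : |s| ≤ 1 := abs_le.mpr ⟨hs.1, hs.2⟩
      linarith
    exact mul_le_mul_of_nonneg_right
      (hGanti (Set.mem_Ioi.mpr hxp) (Set.mem_Ioi.mpr hyp) (by linarith)) hf

omit hGc in
lemma K_nonneg {t : ℝ} (hht : h ≤ t) :
    0 ≤ ∫ s in (-1:ℝ)..1, G (t + h * s) * (1 - |s|) := by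
  refine intervalIntegral.integral_nonneg (by norm_num) (fun s hs => ?_)
  rcases eq_or_lt_of_le hs.1 with rfl | hs1
  · simp
  · have hf : 0 ≤ 1 - |s| := by
      have : |s| ≤ 1 := abs_le.mpr ⟨hs.1, hs.2⟩
      linarith
    exact mul_nonneg (hb _ (by nlinarith)).1 hf

lemma K_slope (hGs : ∀ x y, 0 < x → x ≤ y → d * (y - x) ≤ G y - G x)
    {t : ℝ} (hht : h ≤ t) :
    (∫ s in (-1:ℝ)..1, G (h + h * s) * (1 - |s|)) + d * (t - h) ≤
      ∫ s in (-1:ℝ)..1, G (t + h * s) * (1 - |s|) := by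
  have hIK : IntervalIntegrable (fun s : ℝ => d * (t - h) * (1 - |s|)) volume (-1) 1 :=
    (Continuous.intervalIntegrable (by fun_prop) _ _)
  have e1 : (∫ s in (-1:ℝ)..1, G (h + h * s) * (1 - |s|)) + d * (t - h) =
      ∫ s in (-1:ℝ)..1, (G (h + h * s) * (1 - |s|) + d * (t - h) * (1 - |s|)) := by
    rw [intervalIntegral.integral_add (integrable_kernel hGc hb hh (le_refl h)) hIK,
      intervalIntegral.integral_const_mul, tri_integral, mul_one]
  rw [e1]
  refine intervalIntegral.integral_mono_on (by norm_num)
    ((integrable_kernel hGc hb hh (le_refl h)).add hIK)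
    (integrable_kernel hGc hb hh hht) (fun s hs => ?_)
  rcases eq_or_lt_of_le hs.1 with rfl | hs1
  · simp
  · have hxp : 0 < h + h * s := by nlinarith
    have hf : 0 ≤ 1 - |s| := by
      have : |s| ≤ 1 := abs_le.mpr ⟨hs.1, hs.2⟩
      linarith
    have := hGs (h + h * s) (t + h * s) hxp (by linarith)
    nlinarith

lemma K_le :
    (∫ s in (-1:ℝ)..1, G (h + h * s) * (1 - |s|)) ≤ G0 := by
  have : (∫ s in (-1:ℝ)..1, G0 * (1 - |s|)) = G0 := by
    rw [intervalIntegral.integral_const_mul, tri_integral, mul_one]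
  rw [← this]
  refine intervalIntegral.integral_mono_on (by norm_num)
    (integrable_kernel hGc hb hh (le_refl h))
    (Continuous.intervalIntegrable (by fun_prop) _ _) (fun s hs => ?_)
  rcases eq_or_lt_of_le hs.1 with rfl | hs1
  · simp
  · have hxp : 0 < h + h * s := by nlinarith
    have hf : 0 ≤ 1 - |s| := by
      have : |s| ≤ 1 := abs_le.mpr ⟨hs.1, hs.2⟩
      linarith
    exact mul_le_mul_of_nonneg_right (hb _ hxp).2 hf

end K

end Aux

/-- The discretized kernel `G_n` of Lemma 3.1:
`G_n(0) = γ 2^{-(n+1)} T + 2^{-2n+1} T² ∫₀¹ G(2^{-n}Ts)(1-s) ds`,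
`G_n(t) = 2^{-2n} T² ∫_{-1}^1 G(t + 2^{-n}Ts)(1-|s|) ds` for `t ≥ 2^{-n}T`, and
`G_n` linearly interpolated on `(0, 2^{-n}T)`. -/
noncomputable def Gdisc (γ T : ℝ) (G : ℝ → ℝ) (n : ℕ) : ℝ → ℝ := fun t =>
  if (2 : ℝ) ^ (-(n : ℤ)) * T ≤ t then
    (2 : ℝ) ^ (-(2 * n : ℤ)) * T ^ 2 *
      ∫ s in (-1 : ℝ)..1, G (t + 2 ^ (-(n : ℤ)) * T * s) * (1 - |s|)
  else
    (γ * 2 ^ (-(n : ℤ) - 1) * T +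
        2 ^ (-(2 * n : ℤ) + 1) * T ^ 2 * ∫ s in (0 : ℝ)..1, G (2 ^ (-(n : ℤ)) * T * s) * (1 - s)) +
      t / (2 ^ (-(n : ℤ)) * T) *
        (((2 : ℝ) ^ (-(2 * n : ℤ)) * T ^ 2 *
            ∫ s in (-1 : ℝ)..1, G (2 ^ (-(n : ℤ)) * T + 2 ^ (-(n : ℤ)) * T * s) * (1 - |s|)) -
          (γ * 2 ^ (-(n : ℤ) - 1) * T +
            2 ^ (-(2 * n : ℤ) + 1) * T ^ 2 *
              ∫ s in (0 : ℝ)..1, G (2 ^ (-(n : ℤ)) * T * s) * (1 - s)))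

/-- for convex, nonincreasing, nonnegative `G` with finite `G(0+)` and finite
right-hand derivative at `0`, each `G_n` is convex, nonincreasing and nonnegative on
`[2^{-n}T, ∞)`, and `G_n` is convex on `[0,∞)` for all sufficiently large `n`. -/
theorem stmt18 (γ T : ℝ) (hγ : 0 < γ) (hT : 0 < T) (G : ℝ → ℝ)
    (hGconv : ConvexOn ℝ (Set.Ioi 0) G)
    (hGanti : AntitoneOn G (Set.Ioi 0))
    (hGnonneg : ∀ t, 0 < t → 0 ≤ G t)
    (G0 : ℝ) (hG0 : Filter.Tendsto G (nhdsWithin 0 (Set.Ioi 0)) (nhds G0))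
    (d : ℝ)
    (hd : Filter.Tendsto (fun t => (G t - G0) / t) (nhdsWithin 0 (Set.Ioi 0)) (nhds d)) :
    (∀ n : ℕ,
      ConvexOn ℝ (Set.Ici ((2 : ℝ) ^ (-(n : ℤ)) * T)) (Gdisc γ T G n) ∧
      AntitoneOn (Gdisc γ T G n) (Set.Ici ((2 : ℝ) ^ (-(n : ℤ)) * T)) ∧
      ∀ t ∈ Set.Ici ((2 : ℝ) ^ (-(n : ℤ)) * T), 0 ≤ Gdisc γ T G n t) ∧
    ∃ n₀ : ℕ, ∀ n ≥ n₀, ConvexOn ℝ (Set.Ici (0 : ℝ)) (Gdisc γ T G n) := by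
  have hGc : ContinuousOn G (Set.Ioi 0) := hGconv.continuousOn isOpen_Ioi
  have hb : ∀ x : ℝ, 0 < x → 0 ≤ G x ∧ G x ≤ G0 :=
    fun x hx => ⟨hGnonneg x hx, G_le_G0 hGanti hG0 x hx⟩
  have hGs : ∀ x y, 0 < x → x ≤ y → d * (y - x) ≤ G y - G x :=
    G_slope (G_secant hGconv hG0) (G_ge_lin hGconv hG0 hd)
  have hh : ∀ n : ℕ, (0:ℝ) < 2 ^ (-(n : ℤ)) * T := fun n => by positivity
  have c_eq : ∀ n : ℕ, (2:ℝ) ^ (-(2 * n : ℤ)) * T ^ 2 = ((2:ℝ) ^ (-(n : ℤ)) * T) ^ 2 := by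
    intro n
    rw [mul_pow, ← zpow_natCast ((2:ℝ)^(-(n:ℤ))) 2, ← zpow_mul]
    norm_num [mul_comm]
  have hfun : ∀ n : ℕ, ∀ t, (2:ℝ) ^ (-(n : ℤ)) * T ≤ t →
      Gdisc γ T G n t = ((2:ℝ) ^ (-(n : ℤ)) * T) ^ 2 *
        ∫ s in (-1 : ℝ)..1, G (t + 2 ^ (-(n : ℤ)) * T * s) * (1 - |s|) := by
    intro n t ht
    simp only [Gdisc]
    rw [if_pos ht, c_eq n]
  have part1 : ∀ n : ℕ,
      ConvexOn ℝ (Set.Ici ((2 : ℝ) ^ (-(n : ℤ)) * T)) (Gdisc γ T G n) ∧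
      AntitoneOn (Gdisc γ T G n) (Set.Ici ((2 : ℝ) ^ (-(n : ℤ)) * T)) ∧
      ∀ t ∈ Set.Ici ((2 : ℝ) ^ (-(n : ℤ)) * T), 0 ≤ Gdisc γ T G n t := by
    intro n
    set h : ℝ := (2:ℝ) ^ (-(n : ℤ)) * T with hdef
    have hh' : 0 < h := hh n
    refine ⟨?_, ?_, ?_⟩
    · refine convexOn_congr' (fun t ht => ?_)
        ((K_convex hGc hb hGconv hh').smul (sq_nonneg h))
      rw [hfun n t ht]
      simp only [Pi.smul_apply, smul_eq_mul]
      rfl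
    · intro x hx y hy hxy
      rw [hfun n x hx, hfun n y hy]
      exact mul_le_mul_of_nonneg_left
        (K_anti hGc hb hGanti hh' hx hy hxy) (sq_nonneg h)
    · intro t ht
      rw [hfun n t ht]
      exact mul_nonneg (sq_nonneg h) (K_nonneg hb hh' ht)
  refine ⟨part1, ?_⟩
  -- choose n₀
  have hex : ∃ n₀ : ℕ, ∀ n ≥ n₀, (2:ℝ) ^ (-(n : ℤ)) * (T * (|G0| + T * |d|)) ≤ γ / 2 := by
    have ht : Filter.Tendsto (fun n : ℕ => ((1:ℝ)/2)^n * (T * (|G0| + T * |d|)))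
        Filter.atTop (nhds 0) := by
      simpa using (tendsto_pow_atTop_nhds_zero_of_lt_one (by norm_num : (0:ℝ) ≤ 1/2)
        (by norm_num : (1:ℝ)/2 < 1)).mul_const (T * (|G0| + T * |d|))
    have := (ht.eventually (gt_mem_nhds (show (0:ℝ) < γ/2 by linarith)))
    rw [Filter.eventually_atTop] at this
    obtain ⟨n₀, hn₀⟩ := this
    refine ⟨n₀, fun n hn => ?_⟩
    have he : (2:ℝ)^(-(n:ℤ)) = (1/2)^n := by
      rw [zpow_neg, zpow_natCast, one_div, inv_pow]
    rw [he]
    exact (hn₀ n hn).le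
  obtain ⟨n₀, hn₀⟩ := hex
  refine ⟨n₀, fun n hn => ?_⟩
  set h : ℝ := (2:ℝ) ^ (-(n : ℤ)) * T with hdef
  have hh' : 0 < h := hh n
  have hle1 : (2:ℝ)^(-(n:ℤ)) ≤ 1 := by
    rw [zpow_neg, zpow_natCast, inv_le_one_iff₀]
    right
    exact one_le_pow₀ (by norm_num)
  have hhT : h ≤ T := by
    calc h = (2:ℝ)^(-(n:ℤ)) * T := hdef
    _ ≤ 1 * T := by gcongr
    _ = T := one_mul T
  -- notation
  set A : ℝ := γ * 2 ^ (-(n : ℤ) - 1) * T +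
      2 ^ (-(2 * n : ℤ) + 1) * T ^ 2 * ∫ s in (0 : ℝ)..1, G (2 ^ (-(n : ℤ)) * T * s) * (1 - s)
    with hA
  set K : ℝ → ℝ := fun t => ∫ s in (-1 : ℝ)..1, G (t + 2 ^ (-(n : ℤ)) * T * s) * (1 - |s|)
    with hK
  have hGh : Gdisc γ T G n h = h ^ 2 * K h := hfun n h (le_refl h)
  have hGelse : ∀ t, t < h → Gdisc γ T G n t = A + t / h * (h ^ 2 * K h - A) := by
    intro t ht
    simp only [Gdisc]
    rw [if_neg (not_le.mpr ht), ← hA, c_eq n]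
  set l : ℝ := (h ^ 2 * K h - A) / h with hl
  -- estimates
  have hA_ge : γ * h / 2 ≤ A := by
    have hApos : 0 ≤ (2:ℝ) ^ (-(2 * n : ℤ) + 1) * T ^ 2 *
        ∫ s in (0 : ℝ)..1, G (2 ^ (-(n : ℤ)) * T * s) * (1 - s) := by
      refine mul_nonneg (by positivity) ?_
      rw [intervalIntegral.integral_of_le (by norm_num : (0:ℝ) ≤ 1)]
      refine MeasureTheory.setIntegral_nonneg measurableSet_Ioc (fun s hs => ?_)
      refine mul_nonneg (hGnonneg _ ?_) (by nlinarith [hs.2])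
      have := hs.1
      nlinarith [hh n]
    have he : γ * 2 ^ (-(n : ℤ) - 1) * T = γ * h / 2 := by
      rw [zpow_sub₀ (two_ne_zero), hdef]
      norm_num
      ring
    rw [hA, he]
    linarith
  have hB_le : h ^ 2 * K h ≤ h ^ 2 * G0 :=
    mul_le_mul_of_nonneg_left (K_le hGc hb hh') (sq_nonneg h)
  have hl_le : l ≤ h ^ 2 * d := by
    have h1 : l ≤ h * G0 - γ / 2 := by
      rw [hl, div_le_iff₀ hh']
      nlinarith
    have h2 := hn₀ n hn
    have habs1 : G0 ≤ |G0| := le_abs_self G0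
    have habs2 : -|d| ≤ d := neg_abs_le d
    have hc : h * (|G0| + T * |d|) ≤ γ / 2 := by
      calc h * (|G0| + T * |d|) = (2:ℝ) ^ (-(n : ℤ)) * (T * (|G0| + T * |d|)) := by
            rw [hdef]; ring
      _ ≤ γ / 2 := h2
    have p1 := mul_le_mul_of_nonneg_left habs1 hh'.le
    have p2 := mul_le_mul_of_nonneg_left hhT (mul_nonneg hh'.le (abs_nonneg d))
    have p3 := mul_le_mul_of_nonneg_left habs2 (sq_nonneg h)
    nlinarith [p1, p2, p3, hc, h1]
  -- glue
  refine glue_convex (l := l) hh' ?_ (part1 n).1 ?_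
  · intro t ht
    rcases eq_or_lt_of_le ht.2 with rfl | hlt
    · rw [hGh, sub_self, mul_zero, add_zero]
    · rw [hGelse t hlt, hGh, hl]
      field_simp
      ring
  · intro t ht
    rw [hGh]
    have e1 : Gdisc γ T G n t = h ^ 2 * K t := hfun n t ht.le
    rw [e1]
    have hKs : K h + d * (t - h) ≤ K t := K_slope hGc hb hh' hGs ht.le
    have p := mul_le_mul_of_nonneg_right hl_le (sub_nonneg.2 ht.le)
    have q := mul_le_mul_of_nonneg_left
      (show d * (t - h) ≤ K t - K h by linarith [hKs]) (sq_nonneg h)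
    nlinarith [p, q]
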